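/- Let A be an associative unital ring, h a central element, and let a, b, c, d ∈ A satisfy the gl(2)_h relations: ab − ba = hb, ac − ca = −hc, ad − da = 0, bc − cb = h(a − d), bd − db = hb, cd − dc = −hc. Then the 2×2 matrix L = [[a, b], [c, d]] over A satisfies the Cayley–Hamilton identity L² − (a + d + h)·L + (ad + hd − cb)·I₂ = 0 in Mat_2(A). -/
import Mathlib


/-- The generating matrix `L = [[a,b],[c,d]]` of `U(gl(2)_h)` satisfies the
Cayley–Hamilton identity `L² − (a+d+h)L + (ad+hd−cb)I = 0`. -/
theorem gl2h_cayley_hamilton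
    {A : Type*} [Ring A] (h : A) (hcentral : ∀ u : A, h * u = u * h)
    (a b c d : A)
    (hab : a * b - b * a = h * b)
    (hac : a * c - c * a = -(h * c))
    (had : a * d - d * a = 0)
    (hbc : b * c - c * b = h * (a - d))
    (hbd : b * d - d * b = h * b)
    (hcd : c * d - d * c = -(h * c)) :
    (!![a, b; c, d] : Matrix (Fin 2) (Fin 2) A) ^ 2
      - (a + d + h) • !![a, b; c, d]
      + (a * d + h * d - c * b) • (1 : Matrix (Fin 2) (Fin 2) A) = 0 := by
  have e00 : (!![a, b; c, d] : Matrix (Fin 2) (Fin 2) A) 0 0 = a := rfl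
  have e01 : (!![a, b; c, d] : Matrix (Fin 2) (Fin 2) A) 0 1 = b := rfl
  have e10 : (!![a, b; c, d] : Matrix (Fin 2) (Fin 2) A) 1 0 = c := rfl
  have e11 : (!![a, b; c, d] : Matrix (Fin 2) (Fin 2) A) 1 1 = d := rfl
  ext i j
  fin_cases i <;> fin_cases j <;>
    simp only [pow_two, Matrix.mul_apply, Fin.sum_univ_two, Matrix.smul_apply, Matrix.sub_apply,
      Matrix.add_apply, Matrix.one_apply, Matrix.zero_apply, smul_eq_mul, Fin.mk_zero, Fin.mk_one,
      e00, e01, e10, e11, if_true, mul_one, mul_zero, ne_eq, one_ne_zero, zero_ne_one,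
      not_false_eq_true, if_neg, if_pos, Fin.zero_eq_one_iff, Fin.one_eq_zero_iff, ite_true]
  · linear_combination (norm := noncomm_ring) hbc + had
  · linear_combination (norm := noncomm_ring) hbd
  · linear_combination (norm := noncomm_ring) -hac
  · linear_combination (norm := noncomm_ring) (0 : A) = 0
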